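/- Let D ⊂ ℝ^N be convex open and bounded, P ∈ ∂D, and ν_P an outward unit normal (i.e. ν_P · (x - P) ≤ 0 for all x ∈ \bar{D}). If Q ∈ ∂D with Q ≠ P and ν_P · (P - Q) > 0 and ν_Q · (Q - P) > 0, then for all t, s ∈ (0, min(ν_P·(P-Q), ν_Q·(Q-P))), the segment endpoints P - tν_P and Q - sν_Q satisfy |P - tν_P - (Q - sν_Q)| < |P - Q|. -/
import Mathlib


open scoped RealInnerProductSpace

/-- moving two boundary points of a convex body inward along the
outward normals strictly decreases their distance. -/
theorem stmt16 {N : ℕ} (D : Set (EuclideanSpace ℝ (Fin N))) (hconv : Convex ℝ D)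
    (hD : IsOpen D) (hbd : Bornology.IsBounded D)
    (P Q νP νQ : EuclideanSpace ℝ (Fin N)) (hP : P ∈ frontier D) (hQ : Q ∈ frontier D)
    (hνP : ‖νP‖ = 1) (hνQ : ‖νQ‖ = 1)
    (hout1 : ∀ x ∈ closure D, ⟪νP, x - P⟫ ≤ 0)
    (hout2 : ∀ x ∈ closure D, ⟪νQ, x - Q⟫ ≤ 0)
    (hne : P ≠ Q) (h1 : 0 < ⟪νP, P - Q⟫) (h2 : 0 < ⟪νQ, Q - P⟫)
    (t s : ℝ)
    (ht : t ∈ Set.Ioo 0 (min ⟪νP, P - Q⟫ ⟪νQ, Q - P⟫))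
    (hs : s ∈ Set.Ioo 0 (min ⟪νP, P - Q⟫ ⟪νQ, Q - P⟫)) :
    ‖(P - t • νP) - (Q - s • νQ)‖ < ‖P - Q‖ := by
  obtain ⟨ht0, htm⟩ := ht
  obtain ⟨hs0, hsm⟩ := hs
  set a : ℝ := ⟪νP, P - Q⟫ with ha
  set b : ℝ := ⟪νQ, Q - P⟫ with hb
  have hta : t < a := lt_of_lt_of_le htm (min_le_left _ _)
  have htb : t < b := lt_of_lt_of_le htm (min_le_right _ _)
  have hsa : s < a := lt_of_lt_of_le hsm (min_le_left _ _)
  have hsb : s < b := lt_of_lt_of_le hsm (min_le_right _ _)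
  set v : EuclideanSpace ℝ (Fin N) := P - Q with hv
  set w : EuclideanSpace ℝ (Fin N) := t • νP - s • νQ with hw
  have hrw : (P - t • νP) - (Q - s • νQ) = v - w := by
    simp only [hv, hw]; abel
  have hinner : ⟪v, w⟫ = t * a + s * b := by
    have hQP : ⟪νQ, P - Q⟫ = -b := by
      rw [hb, ← inner_neg_right]; congr 1; abel
    have hQv : ⟪νQ, v⟫ = -b := by rw [hv, hQP]
    rw [hw, inner_sub_right, real_inner_smul_right, real_inner_smul_right,
      real_inner_comm νP v, real_inner_comm νQ v, hQv, ← ha]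
    ring
  have hwnorm : ‖w‖ ≤ t + s := by
    calc ‖w‖ ≤ ‖t • νP‖ + ‖s • νQ‖ := norm_sub_le _ _
    _ = t + s := by
      rw [norm_smul, norm_smul, hνP, hνQ, Real.norm_eq_abs, Real.norm_eq_abs,
        abs_of_pos ht0, abs_of_pos hs0]; ring
  have hsq : ‖v - w‖ ^ 2 < ‖v‖ ^ 2 := by
    have hexp : ‖v - w‖ ^ 2 = ‖v‖ ^ 2 - 2 * ⟪v, w⟫ + ‖w‖ ^ 2 := by
      rw [← real_inner_self_eq_norm_sq, ← real_inner_self_eq_norm_sq,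
        ← real_inner_self_eq_norm_sq, inner_sub_sub_self, real_inner_comm w v]
      ring
    have hw2 : ‖w‖ ^ 2 ≤ (t + s) ^ 2 := by
      apply pow_le_pow_left₀ (norm_nonneg _) hwnorm
    have hkey : (t + s) ^ 2 < 2 * (t * a + s * b) := by nlinarith
    rw [hexp, hinner]
    nlinarith [norm_nonneg w]
  rw [hrw]
  exact lt_of_pow_lt_pow_left₀ 2 (norm_nonneg _) hsq
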